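/- arXiv:2506.09711 — 2 statements merged into one kernel-verified Lean document; each statement's English description precedes it below -/
import Mathlib

section
/- Let $\|\cdot\|$ be a norm on $\mathbb{R}^m$ with dual norm $\|\cdot\|_*$, let $f: \mathbb{R}^m \to \mathbb{R}$ be differentiable and $\beta$-smooth with respect to $\|\cdot\|$, and suppose $g \in \mathbb{R}^m$ satisfies $\|g - \nabla f(\lambda)\|_* \le \gamma$. Define $\lambda^+$ as any minimizer of $\mu \mapsto f(\lambda) + g \cdot (\mu - \lambda) + \frac{\beta}{2}\|\mu - \lambda\|^2$. Then $f(\lambda^+) \le f(\lambda) - \frac{1}{4\beta}\|g\|_*^2 + \frac{\gamma^2}{\beta}$. -/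
/-- Dual norm (with respect to the Euclidean inner ℝ product) of a norm `ν`. -/
noncomputable def dualNorm {m : ℕ} (ν : EuclideanSpace ℝ (Fin m) → ℝ)
    (x : EuclideanSpace ℝ (Fin m)) : ℝ :=
  sSup {t : ℝ | ∃ z, ν z ≤ 1 ∧ t = (inner ℝ x z : ℝ)}

variable {m : ℕ} (ν : EuclideanSpace ℝ (Fin m) → ℝ)
lemma nu_zero (hhom : ∀ (c : ℝ) y, ν (c • y) = |c| * ν y) : ν 0 = 0 := by
  have := hhom 0 0
  simpa using this
lemma nu_sum_le (hhom : ∀ (c : ℝ) y, ν (c • y) = |c| * ν y)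
    (htri : ∀ y z, ν (y + z) ≤ ν y + ν z) {ι : Type*} (s : Finset ι) (F : ι → EuclideanSpace ℝ (Fin m)) :
    ν (∑ i ∈ s, F i) ≤ ∑ i ∈ s, ν (F i) := by
  classical
  induction s using Finset.induction_on with
  | empty => simp [nu_zero ν hhom]
  | insert _ _ h ih =>
      rw [Finset.sum_insert h, Finset.sum_insert h]
      exact le_trans (htri _ _) (by linarith)

lemma abs_apply_le_norm (x : EuclideanSpace ℝ (Fin m)) (i : Fin m) : |x i| ≤ ‖x‖ := by
  rw [EuclideanSpace.norm_eq]
  calc |x i| = Real.sqrt (x i ^ 2) := by rw [Real.sqrt_sq_eq_abs]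
  _ ≤ _ := by
      apply Real.sqrt_le_sqrt
      simp only [Real.norm_eq_abs, sq_abs]
      exact Finset.single_le_sum (f := fun j => x j ^ 2) (fun j _ => sq_nonneg _) (Finset.mem_univ i)

lemma nu_upper (hnn : ∀ y, 0 ≤ ν y) (hhom : ∀ (c : ℝ) y, ν (c • y) = |c| * ν y)
    (htri : ∀ y z, ν (y + z) ≤ ν y + ν z) :
    ∃ C : ℝ, 0 ≤ C ∧ ∀ x : EuclideanSpace ℝ (Fin m), ν x ≤ C * ‖x‖ := by
  classical
  refine ⟨∑ i, ν (EuclideanSpace.single i (1:ℝ)), Finset.sum_nonneg fun i _ => hnn _, fun x => ?_⟩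
  have hx : x = ∑ i, x i • EuclideanSpace.single i (1:ℝ) := by
    have := (EuclideanSpace.basisFun (Fin m) ℝ).sum_repr x
    simp only [EuclideanSpace.basisFun_repr, EuclideanSpace.basisFun_apply] at this
    exact this.symm
  calc ν x ≤ ∑ i, ν (x i • EuclideanSpace.single i (1:ℝ)) := by
        conv_lhs => rw [hx]
        exact nu_sum_le ν hhom htri _ _
  _ ≤ ∑ i, ν (EuclideanSpace.single i (1:ℝ)) * ‖x‖ := by
        apply Finset.sum_le_sum
        intro i _
        rw [hhom]
        calc |x i| * ν (EuclideanSpace.single i (1:ℝ)) ≤ ‖x‖ * ν (EuclideanSpace.single i (1:ℝ)) :=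
          mul_le_mul_of_nonneg_right (by simpa using abs_apply_le_norm x i) (hnn _)
        _ = _ := mul_comm _ _
  _ = _ := by rw [← Finset.sum_mul]

lemma nu_cont (hnn : ∀ y, 0 ≤ ν y) (hhom : ∀ (c : ℝ) y, ν (c • y) = |c| * ν y)
    (htri : ∀ y z, ν (y + z) ≤ ν y + ν z) : Continuous ν := by
  obtain ⟨C, hC0, hC⟩ := nu_upper ν hnn hhom htri
  have key : ∀ a b : EuclideanSpace ℝ (Fin m), ν a - ν b ≤ C * ‖a - b‖ := by
    intro a b
    have h1 : ν a ≤ ν (a - b) + ν b := by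
      have := htri (a - b) b
      simpa using this
    have := hC (a - b)
    linarith
  rw [Metric.continuous_iff]
  intro b ε hε
  refine ⟨ε / (C + 1), by positivity, fun a hab => ?_⟩
  have h1 := key a b
  have h2 := key b a
  have h3 : ‖b - a‖ = ‖a - b‖ := norm_sub_rev b a
  rw [Real.dist_eq]
  have hd : dist a b = ‖a - b‖ := by rw [dist_eq_norm]
  rw [hd] at hab
  have hC1 : C * ‖a - b‖ ≤ C * (ε / (C + 1)) := mul_le_mul_of_nonneg_left hab.le hC0
  have : C * (ε / (C + 1)) < ε := by
    rw [div_eq_inv_mul]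
    have : C / (C+1) < 1 := by
      rw [div_lt_one (by linarith)]; linarith
    calc C * ((C+1)⁻¹ * ε) = (C/(C+1)) * ε := by ring
    _ < 1 * ε := by nlinarith
    _ = ε := one_mul ε
  rw [abs_sub_lt_iff]
  constructor <;> [skip; rw [h3] at h2] <;> linarith

lemma nu_lower (hnn : ∀ y, 0 ≤ ν y) (hhom : ∀ (c : ℝ) y, ν (c • y) = |c| * ν y)
    (htri : ∀ y z, ν (y + z) ≤ ν y + ν z) (hdef : ∀ y, ν y = 0 → y = 0) :
    ∃ c : ℝ, 0 < c ∧ ∀ x : EuclideanSpace ℝ (Fin m), c * ‖x‖ ≤ ν x := by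
  rcases Nat.eq_zero_or_pos m with hm | hm
  · subst hm
    refine ⟨1, one_pos, fun x => ?_⟩
    have hx : x = 0 := Subsingleton.elim x 0
    simp [hx, nu_zero ν hhom]
  · have hne : (Metric.sphere (0 : EuclideanSpace ℝ (Fin m)) 1).Nonempty := by
      refine ⟨EuclideanSpace.single ⟨0, hm⟩ (1:ℝ), ?_⟩
      simp [EuclideanSpace.norm_single]
    obtain ⟨z₀, hz₀S, hz₀min⟩ := (isCompact_sphere (0 : EuclideanSpace ℝ (Fin m)) 1).exists_isMinOn
      hne (nu_cont ν hnn hhom htri).continuousOn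
    have hz₀norm : ‖z₀‖ = 1 := by simpa using hz₀S
    have hz₀ne : z₀ ≠ 0 := by
      intro h; rw [h] at hz₀norm; simp at hz₀norm
    have hc : 0 < ν z₀ := lt_of_le_of_ne (hnn z₀) (fun h => hz₀ne (hdef z₀ h.symm))
    refine ⟨ν z₀, hc, fun x => ?_⟩
    rcases eq_or_ne x 0 with hx | hx
    · simp [hx, nu_zero ν hhom]
    · have hxn : (0:ℝ) < ‖x‖ := norm_pos_iff.2 hx
      set u : EuclideanSpace ℝ (Fin m) := ‖x‖⁻¹ • x with hu
      have hun : u ∈ Metric.sphere (0 : EuclideanSpace ℝ (Fin m)) 1 := by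
        simp [hu, norm_smul, abs_of_pos (inv_pos.2 hxn), inv_mul_cancel₀ hxn.ne']
      have hmin := hz₀min hun
      have hxu : x = ‖x‖ • u := by
        rw [hu, smul_smul, mul_inv_cancel₀ hxn.ne', one_smul]
      have key : ν x = ‖x‖ * ν u := by
        conv_lhs => rw [hxu]
        rw [hhom, abs_of_pos hxn]
      calc ν z₀ * ‖x‖ ≤ ν u * ‖x‖ := mul_le_mul_of_nonneg_right hmin hxn.le
      _ = ν x := by rw [key]; ring

noncomputable def dualNorm' (x : EuclideanSpace ℝ (Fin m)) : ℝ :=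
  sSup {t : ℝ | ∃ z, ν z ≤ 1 ∧ t = (inner ℝ x z : ℝ)}

lemma dual_mem_zero (hhom : ∀ (c : ℝ) y, ν (c • y) = |c| * ν y) (x : EuclideanSpace ℝ (Fin m)) :
    (0:ℝ) ∈ {t : ℝ | ∃ z, ν z ≤ 1 ∧ t = (inner ℝ x z : ℝ)} :=
  ⟨0, by rw [nu_zero ν hhom]; exact ⟨zero_le_one, by simp⟩⟩

lemma dual_bdd (hnn : ∀ y, 0 ≤ ν y) (hhom : ∀ (c : ℝ) y, ν (c • y) = |c| * ν y)
    (htri : ∀ y z, ν (y + z) ≤ ν y + ν z) (hdef : ∀ y, ν y = 0 → y = 0)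
    (x : EuclideanSpace ℝ (Fin m)) :
    BddAbove {t : ℝ | ∃ z, ν z ≤ 1 ∧ t = (inner ℝ x z : ℝ)} := by
  obtain ⟨c, hc, hlow⟩ := nu_lower ν hnn hhom htri hdef
  refine ⟨‖x‖ * c⁻¹, fun t ht => ?_⟩
  obtain ⟨z, hz, rfl⟩ := ht
  have h1 : (inner ℝ x z : ℝ) ≤ ‖x‖ * ‖z‖ := real_inner_le_norm x z
  have h2 : ‖z‖ ≤ c⁻¹ := by
    have := hlow z
    rw [← le_div_iff₀' hc] at this
    calc ‖z‖ ≤ ν z / c := this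
    _ ≤ 1 / c := by gcongr
    _ = c⁻¹ := one_div c
  calc (inner ℝ x z : ℝ) ≤ ‖x‖ * ‖z‖ := h1
  _ ≤ ‖x‖ * c⁻¹ := mul_le_mul_of_nonneg_left h2 (norm_nonneg x)

lemma dual_nonneg (hnn : ∀ y, 0 ≤ ν y) (hhom : ∀ (c : ℝ) y, ν (c • y) = |c| * ν y)
    (htri : ∀ y z, ν (y + z) ≤ ν y + ν z) (hdef : ∀ y, ν y = 0 → y = 0)
    (x : EuclideanSpace ℝ (Fin m)) : 0 ≤ dualNorm' ν x :=
  le_csSup (dual_bdd ν hnn hhom htri hdef x) (dual_mem_zero ν hhom x)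

lemma dual_CS (hnn : ∀ y, 0 ≤ ν y) (hhom : ∀ (c : ℝ) y, ν (c • y) = |c| * ν y)
    (htri : ∀ y z, ν (y + z) ≤ ν y + ν z) (hdef : ∀ y, ν y = 0 → y = 0)
    (x z : EuclideanSpace ℝ (Fin m)) : (inner ℝ x z : ℝ) ≤ dualNorm' ν x * ν z := by
  rcases eq_or_lt_of_le (hnn z) with hz | hz
  · have hz0 : z = 0 := hdef z hz.symm
    rw [hz0]; simp [nu_zero ν hhom]
  · set w : EuclideanSpace ℝ (Fin m) := (ν z)⁻¹ • z with hw
    have hνw : ν w = 1 := by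
      rw [hw, hhom, abs_of_pos (inv_pos.2 hz), inv_mul_cancel₀ hz.ne']
    have hmem : (inner ℝ x w : ℝ) ∈ {t : ℝ | ∃ z, ν z ≤ 1 ∧ t = (inner ℝ x z : ℝ)} :=
      ⟨w, hνw.le, rfl⟩
    have hle : (inner ℝ x w : ℝ) ≤ dualNorm' ν x :=
      le_csSup (dual_bdd ν hnn hhom htri hdef x) hmem
    have hzw : z = ν z • w := by
      rw [hw, smul_smul, mul_inv_cancel₀ hz.ne', one_smul]
    calc (inner ℝ x z : ℝ) = ν z * (inner ℝ x w : ℝ) := by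
          conv_lhs => rw [hzw]
          rw [real_inner_smul_right]
    _ ≤ ν z * dualNorm' ν x := mul_le_mul_of_nonneg_left hle hz.le
    _ = _ := mul_comm _ _

lemma dual_approx (hnn : ∀ y, 0 ≤ ν y) (hhom : ∀ (c : ℝ) y, ν (c • y) = |c| * ν y)
    (x : EuclideanSpace ℝ (Fin m)) {ε : ℝ} (hε : 0 < ε) :
    ∃ z, ν z ≤ 1 ∧ dualNorm' ν x - ε < (inner ℝ x z : ℝ) := by
  have hne : {t : ℝ | ∃ z, ν z ≤ 1 ∧ t = (inner ℝ x z : ℝ)}.Nonempty := ⟨0, dual_mem_zero ν hhom x⟩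
  have hlt : dualNorm' ν x - ε < sSup {t : ℝ | ∃ z, ν z ≤ 1 ∧ t = (inner ℝ x z : ℝ)} := by
    have : dualNorm' ν x - ε < dualNorm' ν x := by linarith
    exact this
  obtain ⟨t, ht, hlt'⟩ := exists_lt_of_lt_csSup hne hlt
  obtain ⟨z, hz, rfl⟩ := ht
  exact ⟨z, hz, hlt'⟩

lemma quad_bound (hnn : ∀ y, 0 ≤ ν y) (hhom : ∀ (c : ℝ) y, ν (c • y) = |c| * ν y)
    (htri : ∀ y z, ν (y + z) ≤ ν y + ν z) (hdef : ∀ y, ν y = 0 → y = 0)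
    (f : EuclideanSpace ℝ (Fin m) → ℝ) (f' : EuclideanSpace ℝ (Fin m) → EuclideanSpace ℝ (Fin m))
    (hgrad : ∀ x, HasGradientAt f (f' x) x) (β : ℝ) (hβ : 0 < β)
    (hsmooth : ∀ x y, dualNorm' ν (f' x - f' y) ≤ β * ν (x - y))
    (x y : EuclideanSpace ℝ (Fin m)) :
    f y ≤ f x + (inner ℝ (f' x) (y - x) : ℝ) + β / 2 * (ν (y - x)) ^ 2 := by
  set d : EuclideanSpace ℝ (Fin m) := y - x with hd
  set k : ℝ := (ν d) ^ 2 with hk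
  have hφ : ∀ t : ℝ, HasDerivAt (fun t : ℝ => f (x + t • d)) ((inner ℝ (f' (x + t • d)) d : ℝ)) t := by
    intro t
    have hline : HasDerivAt (fun t : ℝ => x + t • d) d t := by
      simpa using ((hasDerivAt_id t).smul_const d).const_add x
    have hcomp := ((hgrad (x + t • d)).hasFDerivAt).comp_hasDerivAt t hline
    simp [InnerProductSpace.toDual_apply_apply] at hcomp
    exact hcomp
  set h : ℝ → ℝ := fun t => f (x + t • d) - t * (inner ℝ (f' x) d : ℝ) - β / 2 * t ^ 2 * k with hh
  have hhderiv : ∀ t : ℝ, HasDerivAt h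
      ((inner ℝ (f' (x + t • d)) d : ℝ) - (inner ℝ (f' x) d : ℝ) - β * t * k) t := by
    intro t
    have h1 : HasDerivAt (fun t : ℝ => t * (inner ℝ (f' x) d : ℝ)) ((inner ℝ (f' x) d : ℝ)) t := by
      simpa using (hasDerivAt_id t).mul_const ((inner ℝ (f' x) d : ℝ))
    have h2 : HasDerivAt (fun t : ℝ => β / 2 * t ^ 2 * k) (β * t * k) t := by
      have := ((hasDerivAt_pow 2 t).const_mul (β / 2)).mul_const k
      refine this.congr_deriv ?_
      ring
    exact ((hφ t).sub h1).sub h2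
  have hdiff : Differentiable ℝ h := fun t => (hhderiv t).differentiableAt
  have hderiv_nonpos : ∀ t ∈ interior (Set.Icc (0:ℝ) 1), deriv h t ≤ 0 := by
    intro t ht
    rw [interior_Icc] at ht
    rw [(hhderiv t).deriv]
    have hsub : x + t • d - x = t • d := by abel
    have hCS : (inner ℝ (f' (x + t • d) - f' x) d : ℝ) ≤ dualNorm' ν (f' (x + t • d) - f' x) * ν d :=
      dual_CS ν hnn hhom htri hdef _ _
    have hsm := hsmooth (x + t • d) x
    rw [hsub, hhom] at hsm
    have hνd : 0 ≤ ν d := hnn d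
    have habs : |t| = t := abs_of_pos ht.1
    rw [habs] at hsm
    have hdual_nn : 0 ≤ dualNorm' ν (f' (x + t • d) - f' x) := dual_nonneg ν hnn hhom htri hdef _
    have : (inner ℝ (f' (x + t • d) - f' x) d : ℝ) ≤ β * t * k := by
      calc (inner ℝ (f' (x + t • d) - f' x) d : ℝ) ≤ dualNorm' ν (f' (x + t • d) - f' x) * ν d := hCS
      _ ≤ (β * (t * ν d)) * ν d := mul_le_mul_of_nonneg_right hsm hνd
      _ = β * t * k := by rw [hk]; ring
    rw [inner_sub_left] at this
    linarith
  have hanti := antitoneOn_of_deriv_nonpos (convex_Icc (0:ℝ) 1)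
    hdiff.continuous.continuousOn (hdiff.differentiableOn) hderiv_nonpos
  have h01 := hanti (Set.left_mem_Icc.2 zero_le_one) (Set.right_mem_Icc.2 zero_le_one) zero_le_one
  have h0 : h 0 = f x := by simp [hh]
  have h1 : h 1 = f y - (inner ℝ (f' x) d : ℝ) - β / 2 * k := by
    have hx1 : x + (1:ℝ) • d = y := by rw [one_smul, hd]; abel
    simp only [hh, hx1, one_pow, one_mul, mul_one]
  rw [h0, h1] at h01
  linarith

section
set_option maxHeartbeats 1000000 in
theorem stmt15 {m : ℕ} (ν : EuclideanSpace ℝ (Fin m) → ℝ)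
    (hnn : ∀ y, 0 ≤ ν y)
    (hhom : ∀ (c : ℝ) y, ν (c • y) = |c| * ν y)
    (htri : ∀ y z, ν (y + z) ≤ ν y + ν z)
    (hdef : ∀ y, ν y = 0 → y = 0)
    (f : EuclideanSpace ℝ (Fin m) → ℝ)
    (f' : EuclideanSpace ℝ (Fin m) → EuclideanSpace ℝ (Fin m))
    (hgrad : ∀ x, HasGradientAt f (f' x) x)
    (β : ℝ) (hβ : 0 < β)
    (hsmooth : ∀ x y, dualNorm ν (f' x - f' y) ≤ β * ν (x - y))
    (γ : ℝ) (hγ : 0 ≤ γ)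
    (lam g : EuclideanSpace ℝ (Fin m))
    (hg : dualNorm ν (g - f' lam) ≤ γ)
    (lamp : EuclideanSpace ℝ (Fin m))
    (hmin : ∀ μ : EuclideanSpace ℝ (Fin m),
      f lam + (inner ℝ g (lamp - lam) : ℝ) + β / 2 * (ν (lamp - lam)) ^ 2 ≤
        f lam + (inner ℝ g (μ - lam) : ℝ) + β / 2 * (ν (μ - lam)) ^ 2) :
    f lamp ≤ f lam - 1 / (4 * β) * (dualNorm ν g) ^ 2 + γ ^ 2 / β := by
  have hdd : dualNorm ν = dualNorm' ν := rfl
  rw [hdd] at hsmooth hg ⊢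
  set d : EuclideanSpace ℝ (Fin m) := lamp - lam with hd
  set t : ℝ := ν d with ht
  set G : ℝ := dualNorm' ν g with hG
  have hG0 : 0 ≤ G := dual_nonneg ν hnn hhom htri hdef g
  have ht0 : 0 ≤ t := hnn d
  -- minimum value bound
  have hM : (inner ℝ g d : ℝ) + β / 2 * t ^ 2 ≤ -(G ^ 2 / (2 * β)) := by
    apply le_of_forall_pos_le_add
    intro ε hε
    have hε' : 0 < ε * β / (G + 1) := by positivity
    obtain ⟨z, hz1, hz2⟩ := dual_approx ν hnn hhom g hε'
    set μ : EuclideanSpace ℝ (Fin m) := lam - (G / β) • z with hμ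
    have hμd : μ - lam = -((G / β) • z) := by rw [hμ]; abel
    have hinner : (inner ℝ g (μ - lam) : ℝ) = -(G / β) * (inner ℝ g z : ℝ) := by
      rw [hμd, inner_neg_right, real_inner_smul_right]; ring
    have hνμ : ν (μ - lam) ≤ G / β := by
      rw [hμd]
      have : ν (-((G / β) • z)) = |(-(G/β))| * ν z := by
        rw [← neg_smul]; exact hhom _ _
      rw [this, abs_neg, abs_of_nonneg (by positivity)]
      calc G / β * ν z ≤ G / β * 1 := by
            apply mul_le_mul_of_nonneg_left hz1 (by positivity)
      _ = G / β := mul_one _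
    have hkey := hmin μ
    have hstep : (inner ℝ g d : ℝ) + β / 2 * t ^ 2 ≤
        (inner ℝ g (μ - lam) : ℝ) + β / 2 * (ν (μ - lam)) ^ 2 := by
      rw [ht, hd]; linarith
    have hq : β / 2 * (ν (μ - lam)) ^ 2 ≤ β / 2 * (G / β) ^ 2 := by
      apply mul_le_mul_of_nonneg_left _ (by positivity)
      exact pow_le_pow_left₀ (hnn _) hνμ 2
    have hi : (inner ℝ g (μ - lam) : ℝ) ≤ -(G / β) * (G - ε * β / (G + 1)) := by
      rw [hinner]
      have : G - ε * β / (G + 1) < (inner ℝ g z : ℝ) := hz2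
      nlinarith [div_nonneg hG0 hβ.le]
    have hGG : G / (G + 1) ≤ 1 := by
      rw [div_le_one (by linarith)]; linarith
    have expand : -(G / β) * (G - ε * β / (G + 1)) + β / 2 * (G / β) ^ 2
        = -(G ^ 2 / (2 * β)) + ε * (G / (G + 1)) := by
      field_simp
      ring
    have : -(G ^ 2 / (2 * β)) + ε * (G / (G + 1)) ≤ -(G ^ 2 / (2 * β)) + ε := by
      nlinarith [div_nonneg hG0 (by linarith : (0:ℝ) ≤ G + 1)]
    linarith
  -- Cauchy-Schwarz lower bound on inner ℝ g d
  have hCSd : -(G * t) ≤ (inner ℝ g d : ℝ) := by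
    have := dual_CS ν hnn hhom htri hdef g (-d)
    rw [inner_neg_right] at this
    have hν : ν (-d) = t := by
      rw [ht, ← neg_one_smul ℝ d, hhom]; simp
    rw [hν, ← hG] at this
    linarith
  -- exact step length
  have htG : t = G / β := by
    have h1 : -(G * t) + β / 2 * t ^ 2 ≤ -(G ^ 2 / (2 * β)) := by linarith
    have h2 : (t - G / β) ^ 2 ≤ 0 := by
      have hexp : β / 2 * (t - G / β) ^ 2 = -(G*t) + β/2 * t^2 + G^2/(2*β) := by
        field_simp; ring
      nlinarith
    have h3 := sq_nonneg (t - G / β)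
    have : (t - G / β) ^ 2 = 0 := le_antisymm h2 h3
    have := pow_eq_zero_iff (n := 2) (by norm_num) |>.mp this
    linarith
  -- quadratic upper bound
  have hquad := quad_bound ν hnn hhom htri hdef f f' hgrad β hβ hsmooth lam lamp
  rw [← hd, ← ht] at hquad
  -- gradient error term
  have herr : (inner ℝ (f' lam) d : ℝ) - (inner ℝ g d : ℝ) ≤ γ * t := by
    have hcs := dual_CS ν hnn hhom htri hdef (g - f' lam) (-d)
    rw [inner_neg_right, inner_sub_left] at hcs
    have hν : ν (-d) = t := by
      rw [ht, ← neg_one_smul ℝ d, hhom]; simp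
    rw [hν] at hcs
    have : dualNorm' ν (g - f' lam) * t ≤ γ * t := mul_le_mul_of_nonneg_right hg ht0
    linarith
  -- finish
  have hfin : f lamp ≤ f lam + ((inner ℝ g d : ℝ) + β / 2 * t ^ 2) + γ * t := by linarith
  have : f lamp ≤ f lam - G ^ 2 / (2 * β) + γ * (G / β) := by
    have hγt : γ * t = γ * (G / β) := by rw [htG]
    linarith
  have hyoung : γ * (G / β) ≤ G ^ 2 / (4 * β) + γ ^ 2 / β := by
    have h1 : (0:ℝ) ≤ (γ - G / 2) ^ 2 / β := by positivity
    have h2 : G ^ 2 / (4 * β) + γ ^ 2 / β - γ * (G / β) = (γ - G / 2) ^ 2 / β := by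
      field_simp; ring
    linarith
  have hrw : f lam - 1 / (4 * β) * G ^ 2 + γ ^ 2 / β
      = f lam - G ^ 2 / (2 * β) + (G ^ 2 / (4 * β) + γ ^ 2 / β) := by
    field_simp
    ring
  rw [hrw]
  linarith

end
end

section
/- Let $f: \mathbb{R}^m \to \mathbb{R}$ be differentiable, bounded below by $-p_\star$, and suppose iterates $\lambda_0, \ldots, \lambda_T$ satisfy $\|g_t\|_*^2 \le 4\beta[f(\lambda_t) - f(\lambda_{t+1})] + 4\gamma^2$ and $\|g_t - \nabla f(\lambda_t)\|_* \le \gamma$ for $t = 0, \ldots, T-1$. Then there exists $t \in \{0, \ldots, T-1\}$ such that $\|\nabla f(\lambda_t)\|_* \le \gamma + \sqrt{\frac{4\beta}{T}[f(\lambda_0) + p_\star] + 4\gamma^2}$. -/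
section dnlemmas
variable {m : ℕ} {ν : EuclideanSpace ℝ (Fin m) → ℝ}
  (hnn : ∀ y, 0 ≤ ν y)
  (hhom : ∀ (c : ℝ) y, ν (c • y) = |c| * ν y)
  (htri : ∀ y z, ν (y + z) ≤ ν y + ν z)
  (hdef : ∀ y, ν y = 0 → y = 0)

include hnn hhom htri

lemma nu_zero_s16 : ν 0 = 0 := by
  have := hhom 0 0
  simpa using this

lemma nu_neg (z : EuclideanSpace ℝ (Fin m)) : ν (-z) = ν z := by
  have := hhom (-1) z
  simpa using this

lemma nu_upper_s16 : ∃ C : ℝ, 0 ≤ C ∧ ∀ z, ν z ≤ C * ‖z‖ := by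
  classical
  set e : Fin m → EuclideanSpace ℝ (Fin m) := fun i => EuclideanSpace.single i 1
  refine ⟨∑ i, ν (e i), Finset.sum_nonneg fun i _ => hnn _, fun z => ?_⟩
  have hz : z = ∑ i, z i • e i := by
    ext j
    rw [WithLp.ofLp_sum, Finset.sum_apply]
    simp [e, EuclideanSpace.single_apply]
  calc ν z = ν (∑ i, z i • e i) := by rw [← hz]
    _ ≤ ∑ i, ν (z i • e i) := by
        induction (Finset.univ : Finset (Fin m)) using Finset.induction with
        | empty =>
          simp only [Finset.sum_empty]
          simp [nu_zero_s16 hnn hhom htri]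
        | insert _ _ hx ih =>
          rw [Finset.sum_insert hx, Finset.sum_insert hx]
          exact le_trans (htri _ _) (by linarith)
    _ ≤ ∑ i, ν (e i) * ‖z‖ := by
        refine Finset.sum_le_sum fun i _ => ?_
        rw [hhom, mul_comm]
        have habs : |z i| ≤ ‖z‖ := by
          rw [EuclideanSpace.norm_eq]
          have h1 : |z i| = Real.sqrt (‖z i‖ ^ 2) := by rw [Real.sqrt_sq_eq_abs]; simp
          rw [h1]
          exact Real.sqrt_le_sqrt
            (Finset.single_le_sum (fun j _ => sq_nonneg (‖z j‖)) (Finset.mem_univ i))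
        exact mul_le_mul_of_nonneg_left habs (hnn _)
    _ = (∑ i, ν (e i)) * ‖z‖ := by rw [Finset.sum_mul]

lemma nu_continuous : Continuous ν := by
  obtain ⟨C, hC, hCb⟩ := nu_upper_s16 hnn hhom htri
  refine (LipschitzWith.of_dist_le_mul (K := Real.toNNReal C) (fun a b => ?_)).continuous
  have h1 : ν a ≤ ν b + ν (a - b) := by
    have := htri (b) (a - b)
    simpa using this
  have h2 : ν b ≤ ν a + ν (b - a) := by
    have := htri (a) (b - a)
    simpa using this
  have h3 : ν (b - a) = ν (a - b) := by
    rw [← neg_sub a b, nu_neg hnn hhom htri]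
  have h4 : ν (a - b) ≤ C * ‖a - b‖ := hCb _
  rw [Real.dist_eq, Real.coe_toNNReal C hC, dist_eq_norm]
  rw [abs_le]
  constructor <;> [linarith [h2, h3, h4]; linarith [h1, h4]]

include hdef in
lemma nu_lower_s16 : ∃ c : ℝ, 0 < c ∧ ∀ z, ‖z‖ ≤ c * ν z := by
  by_cases hm : m = 0
  · subst hm
    refine ⟨1, one_pos, fun z => ?_⟩
    have : z = 0 := Subsingleton.elim z 0
    simp [this, nu_zero_s16 hnn hhom htri]
  · haveI : Nonempty (Fin m) := ⟨⟨0, Nat.pos_of_ne_zero hm⟩⟩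
    haveI : Nontrivial (EuclideanSpace ℝ (Fin m)) := by
      refine ⟨0, EuclideanSpace.single ⟨0, Nat.pos_of_ne_zero hm⟩ 1, ?_⟩
      intro h
      have := congrArg (fun v : EuclideanSpace ℝ (Fin m) => v ⟨0, Nat.pos_of_ne_zero hm⟩) h.symm
      simp [EuclideanSpace.single_apply] at this
    have hsph : (Metric.sphere (0 : EuclideanSpace ℝ (Fin m)) 1).Nonempty :=
      NormedSpace.sphere_nonempty.mpr zero_le_one
    obtain ⟨z₀, hz₀mem, hz₀min⟩ := (isCompact_sphere (0 : EuclideanSpace ℝ (Fin m)) 1).exists_isMinOn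
      hsph ((nu_continuous hnn hhom htri).continuousOn)
    have hz₀norm : ‖z₀‖ = 1 := by simpa using hz₀mem
    have ha : 0 < ν z₀ := by
      rcases (hnn z₀).lt_or_eq with h | h
      · exact h
      · exfalso
        have := hdef z₀ h.symm
        rw [this] at hz₀norm
        simp at hz₀norm
    refine ⟨(ν z₀)⁻¹, inv_pos.mpr ha, fun z => ?_⟩
    by_cases hz : z = 0
    · simp [hz, nu_zero_s16 hnn hhom htri]
    · have hzn : 0 < ‖z‖ := norm_pos_iff.mpr hz
      set u := ‖z‖⁻¹ • z with hu
      have hunorm : u ∈ Metric.sphere (0 : EuclideanSpace ℝ (Fin m)) 1 := by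
        simp [hu, norm_smul, abs_of_pos (inv_pos.mpr hzn), inv_mul_cancel₀ hzn.ne']
      have : ν z₀ ≤ ν u := hz₀min hunorm
      rw [hu, hhom, abs_of_pos (inv_pos.mpr hzn)] at this
      have h5 := mul_le_mul_of_nonneg_left this hzn.le
      rw [← mul_assoc, mul_inv_cancel₀ hzn.ne', one_mul] at h5
      rw [le_inv_mul_iff₀ ha]
      calc ν z₀ * ‖z‖ = ‖z‖ * ν z₀ := mul_comm _ _
        _ ≤ ν z := h5
end dnlemmas

section dnprops
variable {m : ℕ} {ν : EuclideanSpace ℝ (Fin m) → ℝ}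
  (hnn : ∀ y, 0 ≤ ν y)
  (hhom : ∀ (c : ℝ) y, ν (c • y) = |c| * ν y)
  (htri : ∀ y z, ν (y + z) ≤ ν y + ν z)
  (hdef : ∀ y, ν y = 0 → y = 0)

include hnn hhom htri hdef

lemma dn_mem (x z : EuclideanSpace ℝ (Fin m)) (hz : ν z ≤ 1) :
    (inner ℝ x z : ℝ) ∈ {t : ℝ | ∃ z, ν z ≤ 1 ∧ t = (inner ℝ x z : ℝ)} := ⟨z, hz, rfl⟩

lemma dn_zero_mem (x : EuclideanSpace ℝ (Fin m)) :
    (0 : ℝ) ∈ {t : ℝ | ∃ z, ν z ≤ 1 ∧ t = (inner ℝ x z : ℝ)} :=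
  ⟨0, by rw [nu_zero_s16 hnn hhom htri]; exact zero_le_one, by simp⟩

lemma dn_bdd (x : EuclideanSpace ℝ (Fin m)) :
    BddAbove {t : ℝ | ∃ z, ν z ≤ 1 ∧ t = (inner ℝ x z : ℝ)} := by
  obtain ⟨c, hc, hcb⟩ := nu_lower_s16 hnn hhom htri hdef
  refine ⟨‖x‖ * c, fun t ⟨z, hz, ht⟩ => ?_⟩
  have h1 : (inner ℝ x z : ℝ) ≤ ‖x‖ * ‖z‖ := real_inner_le_norm x z
  have h2 : ‖z‖ ≤ c * ν z := hcb z
  have h3 : ‖z‖ ≤ c := le_trans h2 (by nlinarith)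
  rw [ht]
  calc (inner ℝ x z : ℝ) ≤ ‖x‖ * ‖z‖ := h1
    _ ≤ ‖x‖ * c := mul_le_mul_of_nonneg_left h3 (norm_nonneg x)

lemma dn_nonneg (x : EuclideanSpace ℝ (Fin m)) : 0 ≤ dualNorm ν x :=
  le_csSup (dn_bdd hnn hhom htri hdef x) (dn_zero_mem hnn hhom htri hdef x)

lemma dn_inner_le (x z : EuclideanSpace ℝ (Fin m)) (hz : ν z ≤ 1) :
    (inner ℝ x z : ℝ) ≤ dualNorm ν x :=
  le_csSup (dn_bdd hnn hhom htri hdef x) (dn_mem hnn hhom htri hdef x z hz)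

lemma dn_triangle (a b : EuclideanSpace ℝ (Fin m)) :
    dualNorm ν (a + b) ≤ dualNorm ν a + dualNorm ν b := by
  refine csSup_le ⟨0, dn_zero_mem hnn hhom htri hdef _⟩ ?_
  rintro t ⟨z, hz, rfl⟩
  rw [inner_add_left]
  exact add_le_add (dn_inner_le hnn hhom htri hdef a z hz)
    (dn_inner_le hnn hhom htri hdef b z hz)

lemma dn_neg_le (x : EuclideanSpace ℝ (Fin m)) : dualNorm ν (-x) ≤ dualNorm ν x := by
  refine csSup_le ⟨0, dn_zero_mem hnn hhom htri hdef _⟩ ?_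
  rintro t ⟨z, hz, rfl⟩
  have hz' : ν (-z) ≤ 1 := by rw [nu_neg hnn hhom htri]; exact hz
  have : (inner ℝ (-x) z : ℝ) = (inner ℝ x (-z) : ℝ) := by
    rw [inner_neg_left, inner_neg_right]
  rw [this]
  exact dn_inner_le hnn hhom htri hdef x (-z) hz'
end dnprops

theorem stmt16 {m : ℕ} (ν : EuclideanSpace ℝ (Fin m) → ℝ)
    (hnn : ∀ y, 0 ≤ ν y)
    (hhom : ∀ (c : ℝ) y, ν (c • y) = |c| * ν y)
    (htri : ∀ y z, ν (y + z) ≤ ν y + ν z)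
    (hdef : ∀ y, ν y = 0 → y = 0)
    (f : EuclideanSpace ℝ (Fin m) → ℝ)
    (f' : EuclideanSpace ℝ (Fin m) → EuclideanSpace ℝ (Fin m))
    (hgrad : ∀ x, HasGradientAt f (f' x) x)
    (pstar β γ : ℝ) (hβ : 0 < β) (hγ : 0 < γ)
    (hlb : ∀ lam, -pstar ≤ f lam)
    (T : ℕ) (hT : 0 < T)
    (lam : ℕ → EuclideanSpace ℝ (Fin m)) (g : ℕ → EuclideanSpace ℝ (Fin m))
    (hdec : ∀ t < T, (dualNorm ν (g t)) ^ 2 ≤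
      4 * β * (f (lam t) - f (lam (t + 1))) + 4 * γ ^ 2)
    (herr : ∀ t < T, dualNorm ν (g t - f' (lam t)) ≤ γ) :
    ∃ t < T, dualNorm ν (f' (lam t)) ≤
      γ + Real.sqrt (4 * β / T * (f (lam 0) + pstar) + 4 * γ ^ 2) := by
  set D : ℝ := f (lam 0) + pstar with hD
  have hD0 : 0 ≤ D := by have := hlb (lam 0); linarith
  set avg : ℝ := 4 * β / T * D + 4 * γ ^ 2 with havg
  have hTpos : (0 : ℝ) < T := by exact_mod_cast hT
  -- sum bound
  have hsum : ∑ t ∈ Finset.range T, (dualNorm ν (g t)) ^ 2 ≤ ∑ t ∈ Finset.range T, avg := by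
    calc ∑ t ∈ Finset.range T, (dualNorm ν (g t)) ^ 2
        ≤ ∑ t ∈ Finset.range T, (4 * β * (f (lam t) - f (lam (t + 1))) + 4 * γ ^ 2) :=
          Finset.sum_le_sum fun t ht => hdec t (Finset.mem_range.mp ht)
      _ = 4 * β * (f (lam 0) - f (lam T)) + T * (4 * γ ^ 2) := by
          rw [Finset.sum_add_distrib, ← Finset.mul_sum, Finset.sum_range_sub',
            Finset.sum_const, Finset.card_range, nsmul_eq_mul]
      _ ≤ 4 * β * D + T * (4 * γ ^ 2) := by
          have := hlb (lam T)
          nlinarith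
      _ = ∑ t ∈ Finset.range T, avg := by
          rw [Finset.sum_const, Finset.card_range, nsmul_eq_mul, havg]
          field_simp
  obtain ⟨t, htmem, htle⟩ := Finset.exists_le_of_sum_le
    ⟨0, Finset.mem_range.mpr hT⟩ hsum
  have htT := Finset.mem_range.mp htmem
  refine ⟨t, htT, ?_⟩
  have hgle : dualNorm ν (g t) ≤ Real.sqrt avg := by
    rw [← Real.sqrt_sq (dn_nonneg hnn hhom htri hdef (g t))]
    exact Real.sqrt_le_sqrt htle
  have hsplit : f' (lam t) = (f' (lam t) - g t) + g t := by abel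
  calc dualNorm ν (f' (lam t))
      = dualNorm ν ((f' (lam t) - g t) + g t) := by rw [← hsplit]
    _ ≤ dualNorm ν (f' (lam t) - g t) + dualNorm ν (g t) :=
        dn_triangle hnn hhom htri hdef _ _
    _ ≤ γ + Real.sqrt avg := by
        refine add_le_add ?_ hgle
        have h1 : f' (lam t) - g t = -(g t - f' (lam t)) := by abel
        rw [h1]
        exact le_trans (dn_neg_le hnn hhom htri hdef _) (herr t htT)
end
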